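/- Let Ω be a completely regular Hausdorff space, X a locally convex Hausdorff space, and X₀ a dense subset of X. Then the linear span of {φ ⊗ x : φ ∈ C_b(Ω, ℂ), x ∈ X₀}, where (φ ⊗ x)(t) = φ(t)·x, is dense in the uniform topology in the space 𝒦C(Ω, X) of continuous functions Ω → X with relatively compact range. -/

import Mathlib

open Finset in
private lemma seminorm_sum_le' {X : Type*} [AddCommGroup X] [Module ℂ X]
    (p : Seminorm ℂ X) {ι : Type*} (s : Finset ι) (f : ι → X) :
    p (∑ i ∈ s, f i) ≤ ∑ i ∈ s, p (f i) := by
  classical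
  induction s using Finset.induction_on with
  | empty => simp
  | insert _ _ h ih =>
    rw [Finset.sum_insert h, Finset.sum_insert h]
    exact (map_add_le_add p _ _).trans (by linarith)

theorem stmt_13 {Ω X : Type*} [TopologicalSpace Ω] [CompletelyRegularSpace Ω]
    [T2Space Ω] [AddCommGroup X] [Module ℂ X] [TopologicalSpace X]
    [IsTopologicalAddGroup X] [ContinuousSMul ℂ X] [LocallyConvexSpace ℝ X]
    [T2Space X] (X₀ : Set X) (hX₀ : Dense X₀) :
    ∀ f : Ω → X, Continuous f → IsCompact (closure (Set.range f)) →
      ∀ p : Seminorm ℂ X, Continuous p → ∀ ε > (0 : ℝ),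
        ∃ g ∈ Submodule.span ℂ {h : Ω → X | ∃ (φ : Ω → ℂ) (x : X),
          Continuous φ ∧ Bornology.IsBounded (Set.range φ) ∧ x ∈ X₀ ∧
            h = fun t => φ t • x},
          ∀ t : Ω, p (f t - g t) < ε := by
  classical
  intro f hf hK p hp ε hε
  set K := closure (Set.range f) with hKdef
  -- finite subcover by seminorm-balls of radius ε/2
  have hcov : K ⊆ ⋃ x ∈ K, {y | p (y - x) < ε / 2} := fun y hy =>
    Set.mem_biUnion hy (by simp only [Set.mem_setOf_eq, sub_self, map_zero]; linarith)
  have hopen : ∀ x ∈ K, IsOpen {y | p (y - x) < ε / 2} := fun x _ =>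
    isOpen_lt (hp.comp (continuous_id.sub continuous_const)) continuous_const
  obtain ⟨s, hsK, hsfin, hscov⟩ := hK.elim_finite_subcover_image hopen hcov
  -- choose approximants in X₀
  have hchoice : ∀ x : X, ∃ z : X, z ∈ X₀ ∧ p (x - z) < ε / 4 := by
    intro x
    have hop : IsOpen {z | p (x - z) < ε / 4} :=
      isOpen_lt (hp.comp (continuous_const.sub continuous_id)) continuous_const
    have hne : ({z | p (x - z) < ε / 4}).Nonempty :=
      ⟨x, by simp only [Set.mem_setOf_eq, sub_self, map_zero]; linarith⟩
    obtain ⟨z, hz₀, hz⟩ := hX₀.exists_mem_open hop hne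
    exact ⟨z, hz₀, hz⟩
  choose x' hx'₀ hx' using hchoice
  set T : Finset X := hsfin.toFinset with hT
  set gf : X → X → ℝ := fun i y => max 0 (ε / 2 - p (y - i)) with hgf
  set S : X → ℝ := fun y => ∑ i ∈ T, gf i y with hSdef
  have hgf_nonneg : ∀ i y, 0 ≤ gf i y := fun i y => le_max_left _ _
  have hSpos : ∀ ω : Ω, 0 < S (f ω) := by
    intro ω
    have hmem : f ω ∈ K := subset_closure ⟨ω, rfl⟩
    obtain ⟨i, hi, hfi⟩ := Set.mem_iUnion₂.1 (hscov hmem)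
    refine Finset.sum_pos' (fun j _ => hgf_nonneg j _) ⟨i, hsfin.mem_toFinset.2 hi, ?_⟩
    have : 0 < ε / 2 - p (f ω - i) := by
      simp only [Set.mem_setOf_eq] at hfi; linarith
    exact lt_max_of_lt_right this
  set φ : X → Ω → ℝ := fun i ω => gf i (f ω) / S (f ω) with hφ
  have hφ_nonneg : ∀ i ω, 0 ≤ φ i ω := fun i ω =>
    div_nonneg (hgf_nonneg _ _) (hSpos ω).le
  have hφ_le_one : ∀ i ∈ T, ∀ ω, φ i ω ≤ 1 := by
    intro i hi ω
    rw [hφ, div_le_one (hSpos ω)]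
    exact Finset.single_le_sum (fun j _ => hgf_nonneg j _) hi
  have hφ_sum : ∀ ω, ∑ i ∈ T, φ i ω = 1 := by
    intro ω
    rw [show (∑ i ∈ T, φ i ω) = (∑ i ∈ T, gf i (f ω)) / S (f ω) from
      (Finset.sum_div _ _ _).symm]
    exact div_self (hSpos ω).ne'
  have hgf_cont : ∀ i : X, Continuous fun y => gf i y := fun i =>
    continuous_const.max (continuous_const.sub (hp.comp (continuous_id.sub continuous_const)))
  have hS_cont : Continuous S := continuous_finset_sum _ fun i _ => hgf_cont i
  have hφ_cont : ∀ i, Continuous fun ω => φ i ω := fun i =>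
    (((hgf_cont i).comp hf).div (hS_cont.comp hf)) fun ω => (hSpos ω).ne'
  -- the approximant
  refine ⟨fun ω => ∑ i ∈ T, ((φ i ω : ℂ)) • x' i, ?_, ?_⟩
  · have heq : (fun ω => ∑ i ∈ T, ((φ i ω : ℂ)) • x' i)
        = ∑ i ∈ T, (fun ω => ((φ i ω : ℂ)) • x' i) := by
      funext ω; simp [Finset.sum_apply]
    rw [heq]
    refine Submodule.sum_mem _ fun i hi => Submodule.subset_span ?_
    refine ⟨fun ω => ((φ i ω : ℂ)), x' i, ?_, ?_, hx'₀ i, rfl⟩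
    · exact Complex.continuous_ofReal.comp (hφ_cont i)
    · refine Metric.isBounded_closedBall (x := (0 : ℂ)) (r := 1) |>.subset ?_
      rintro z ⟨ω, rfl⟩
      simp only [Metric.mem_closedBall, dist_zero_right, Complex.norm_real,
        Real.norm_eq_abs, abs_of_nonneg (hφ_nonneg i ω)]
      exact hφ_le_one i hi ω
  · intro ω
    have hkey : f ω - (∑ i ∈ T, ((φ i ω : ℂ)) • x' i)
        = ∑ i ∈ T, ((φ i ω : ℂ)) • (f ω - x' i) := by
      have h1 : (∑ i ∈ T, ((φ i ω : ℂ))) = 1 := by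
        rw [← Complex.ofReal_sum, hφ_sum ω, Complex.ofReal_one]
      calc f ω - (∑ i ∈ T, ((φ i ω : ℂ)) • x' i)
          = (∑ i ∈ T, ((φ i ω : ℂ))) • f ω - ∑ i ∈ T, ((φ i ω : ℂ)) • x' i := by
            rw [h1, one_smul]
        _ = ∑ i ∈ T, (((φ i ω : ℂ)) • f ω - ((φ i ω : ℂ)) • x' i) := by
            rw [Finset.sum_smul, Finset.sum_sub_distrib]
        _ = ∑ i ∈ T, ((φ i ω : ℂ)) • (f ω - x' i) := by
            simp [smul_sub]
    rw [hkey]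
    have hterm : ∀ i ∈ T, p (((φ i ω : ℂ)) • (f ω - x' i)) ≤ φ i ω * (3 * ε / 4) := by
      intro i hi
      rw [map_smul_eq_mul]
      simp only [Complex.norm_real, Real.norm_eq_abs, abs_of_nonneg (hφ_nonneg i ω)]
      rcases eq_or_lt_of_le (hφ_nonneg i ω) with h0 | h0
      · rw [← h0]; simp
      · have hgpos : 0 < gf i (f ω) := by
          by_contra h
          push_neg at h
          have : gf i (f ω) = 0 := le_antisymm h (hgf_nonneg _ _)
          rw [hφ] at h0; simp only [this, zero_div] at h0; exact lt_irrefl _ h0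
        have hpi : p (f ω - i) < ε / 2 := by
          rw [hgf] at hgpos
          rcases lt_max_iff.1 hgpos with h | h
          · exact absurd h (lt_irrefl 0)
          · linarith
        have hbd : p (f ω - x' i) ≤ p (f ω - i) + p (i - x' i) := by
          have : f ω - x' i = (f ω - i) + (i - x' i) := by abel
          rw [this]; exact map_add_le_add p _ _
        have : p (f ω - x' i) ≤ 3 * ε / 4 := by
          have := hx' i; linarith
        exact mul_le_mul_of_nonneg_left this (hφ_nonneg i ω)
    calc p (∑ i ∈ T, ((φ i ω : ℂ)) • (f ω - x' i))
        ≤ ∑ i ∈ T, p (((φ i ω : ℂ)) • (f ω - x' i)) := seminorm_sum_le' p T _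
      _ ≤ ∑ i ∈ T, φ i ω * (3 * ε / 4) := Finset.sum_le_sum hterm
      _ = (∑ i ∈ T, φ i ω) * (3 * ε / 4) := by rw [Finset.sum_mul]
      _ = 3 * ε / 4 := by rw [hφ_sum ω, one_mul]
      _ < ε := by linarith
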